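/- Let F : ℝ × ℝ^{m×n} → ℝ^{m×n} satisfy ⟨Y, F(t, Y)⟩_F = 0 for all Y ∈ ℝ^{m×n} and all t. Let Û ∈ ℝ^{m×k} and V̂ ∈ ℝ^{n×k} have orthonormal columns, and let S : ℝ → ℝ^{k×k} be differentiable on [t0, t1] with S'(t) = Ûᵀ F(t, Û S(t) V̂ᵀ) V̂ for t ∈ [t0, t1]. Suppose Y0 = Û S(t0) V̂ᵀ, and let Y1 ∈ ℝ^{m×n} satisfy ‖Y1 − Û S(t1) V̂ᵀ‖_F ≤ ϑ. Then | ‖Y1‖_F − ‖Y0‖_F | ≤ ϑ. -/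

import Mathlib

open Matrix

/-- The Frobenius inner product `⟨A, B⟩_F = trace(Aᵀ B)`. -/
noncomputable def frobInner {m n : ℕ} (A B : Matrix (Fin m) (Fin n) ℝ) : ℝ :=
  (Aᵀ * B).trace

/-- The Frobenius norm `‖A‖_F = ⟨A, A⟩_F^{1/2}`. -/
noncomputable def frobNorm {m n : ℕ} (A : Matrix (Fin m) (Fin n) ℝ) : ℝ :=
  Real.sqrt (frobInner A A)

lemma frobInner_eq_sum {m n : ℕ} (A B : Matrix (Fin m) (Fin n) ℝ) :
    frobInner A B = ∑ i, ∑ j, A i j * B i j := by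
  rw [frobInner, Matrix.trace]
  simp only [Matrix.diag_apply, Matrix.mul_apply, Matrix.transpose_apply]
  exact Finset.sum_comm

lemma frobInner_conj {m n k : ℕ} (U : Matrix (Fin m) (Fin k) ℝ)
    (V : Matrix (Fin n) (Fin k) ℝ) (A : Matrix (Fin k) (Fin k) ℝ)
    (B : Matrix (Fin m) (Fin n) ℝ) :
    frobInner (U * A * Vᵀ) B = frobInner A (Uᵀ * B * V) := by
  unfold frobInner
  rw [Matrix.transpose_mul, Matrix.transpose_mul, Matrix.transpose_transpose]
  rw [show V * (Aᵀ * Uᵀ) * B = V * (Aᵀ * (Uᵀ * B)) by simp only [Matrix.mul_assoc]]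
  rw [Matrix.trace_mul_comm]
  simp only [Matrix.mul_assoc]

lemma frobInner_conj_self {m n k : ℕ} {U : Matrix (Fin m) (Fin k) ℝ}
    {V : Matrix (Fin n) (Fin k) ℝ} (hU : Uᵀ * U = 1) (hV : Vᵀ * V = 1)
    (A : Matrix (Fin k) (Fin k) ℝ) :
    frobInner (U * A * Vᵀ) (U * A * Vᵀ) = frobInner A A := by
  rw [frobInner_conj]
  congr 1
  calc Uᵀ * (U * A * Vᵀ) * V = (Uᵀ * U) * A * (Vᵀ * V) := by
        simp only [Matrix.mul_assoc]
      _ = A := by rw [hU, hV, Matrix.one_mul, Matrix.mul_one]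

noncomputable def matToE {m n : ℕ} (A : Matrix (Fin m) (Fin n) ℝ) :
    EuclideanSpace ℝ (Fin m × Fin n) :=
  (WithLp.equiv 2 _).symm (fun p => A p.1 p.2)

lemma frobNorm_eq_norm {m n : ℕ} (A : Matrix (Fin m) (Fin n) ℝ) :
    frobNorm A = ‖matToE A‖ := by
  rw [frobNorm, EuclideanSpace.norm_eq, frobInner_eq_sum]
  congr 1
  rw [Fintype.sum_prod_type]
  refine Finset.sum_congr rfl fun i _ => Finset.sum_congr rfl fun j _ => ?_
  simp [matToE, Real.norm_eq_abs, sq_abs, sq]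

lemma abs_frobNorm_sub_frobNorm_le {m n : ℕ} (A B : Matrix (Fin m) (Fin n) ℝ) :
    |frobNorm A - frobNorm B| ≤ frobNorm (A - B) := by
  rw [frobNorm_eq_norm, frobNorm_eq_norm, frobNorm_eq_norm,
    show matToE (A - B) = matToE A - matToE B from rfl]
  exact abs_norm_sub_norm_le _ _

/-- Theorem 4 (norm preservation): one step of the rank-adaptive integrator (Galerkin S-step
followed by rank truncation with tolerance `ϑ`) preserves the Frobenius norm up to `ϑ`
when the differential equation does. -/
theorem rank_adaptive_norm_preservation
    {m n k : ℕ} {t0 t1 ϑ : ℝ}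
    (F : ℝ → Matrix (Fin m) (Fin n) ℝ → Matrix (Fin m) (Fin n) ℝ)
    (hF : ∀ t Y, frobInner Y (F t Y) = 0)
    (Uhat : Matrix (Fin m) (Fin k) ℝ) (Vhat : Matrix (Fin n) (Fin k) ℝ)
    (hU : Uhatᵀ * Uhat = 1) (hV : Vhatᵀ * Vhat = 1)
    (S : ℝ → Matrix (Fin k) (Fin k) ℝ)
    (ht : t0 ≤ t1)
    (hS : ∀ t ∈ Set.Icc t0 t1, ∀ i j,
      HasDerivAt (fun s => S s i j) ((Uhatᵀ * F t (Uhat * S t * Vhatᵀ) * Vhat) i j) t)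
    (Y0 Y1 : Matrix (Fin m) (Fin n) ℝ)
    (hY0 : Y0 = Uhat * S t0 * Vhatᵀ)
    (hY1 : frobNorm (Y1 - Uhat * S t1 * Vhatᵀ) ≤ ϑ) :
    |frobNorm Y1 - frobNorm Y0| ≤ ϑ := by
  set g : ℝ → ℝ := fun s => ∑ i, ∑ j, S s i j * S s i j with hg
  -- derivative of g is zero on [t0, t1]
  have hgderiv : ∀ t ∈ Set.Icc t0 t1, HasDerivAt g 0 t := by
    intro t htI
    set D := Uhatᵀ * F t (Uhat * S t * Vhatᵀ) * Vhat with hD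
    have h1 : HasDerivAt g (∑ i, ∑ j, (D i j * S t i j + S t i j * D i j)) t := by
      apply HasDerivAt.fun_sum
      intro i _
      apply HasDerivAt.fun_sum
      intro j _
      exact (hS t htI i j).mul (hS t htI i j)
    have h2 : (∑ i, ∑ j, (D i j * S t i j + S t i j * D i j)) = 0 := by
      have key : frobInner (S t) D = 0 := by
        rw [← frobInner_conj, hF]
      have : (∑ i, ∑ j, (D i j * S t i j + S t i j * D i j))
          = 2 * ∑ i, ∑ j, S t i j * D i j := by
        rw [Finset.mul_sum]
        congr 1; ext i
        rw [Finset.mul_sum]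
        congr 1; ext j
        ring
      rw [this, ← frobInner_eq_sum, key, mul_zero]
    rwa [h2] at h1
  -- g is constant on [t0, t1]
  have hcont : ContinuousOn g (Set.Icc t0 t1) := fun t htI =>
    (hgderiv t htI).continuousAt.continuousWithinAt
  have hconst : g t1 = g t0 := by
    have := constant_of_has_deriv_right_zero hcont
      (fun x hx => ((hgderiv x (Set.Ico_subset_Icc_self hx)).hasDerivWithinAt))
      t1 (Set.right_mem_Icc.mpr ht)
    exact this
  -- norms agree
  have hnorm : frobNorm (Uhat * S t1 * Vhatᵀ) = frobNorm Y0 := by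
    rw [hY0, frobNorm, frobNorm, frobInner_conj_self hU hV, frobInner_conj_self hU hV,
      frobInner_eq_sum, frobInner_eq_sum]
    exact congrArg Real.sqrt hconst
  calc |frobNorm Y1 - frobNorm Y0|
      = |frobNorm Y1 - frobNorm (Uhat * S t1 * Vhatᵀ)| := by rw [hnorm]
    _ ≤ frobNorm (Y1 - Uhat * S t1 * Vhatᵀ) := abs_frobNorm_sub_frobNorm_le _ _
    _ ≤ ϑ := hY1
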